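/- The ranking 0/1 loss of the sign classifier satisfies L_r^{0/1}(sgn∘f(x), y) ≤ (c / min{|Y⁺|,|Y⁻|}) · L_h^{0/1}(sgn∘f(x), y); in particular L_r^{0/1}(sgn∘f(x), y) ≤ c · L_h^{0/1}(sgn∘f(x), y). -/

import Mathlib

theorem ranking_le_c_mul_hamming (c : ℕ) (hc : 1 ≤ c)
    (H : Fin c → ℝ) (hH : ∀ j, H j = -1 ∨ H j = 1)
    (y : Fin c → ℝ) (hy : ∀ j, y j = -1 ∨ y j = 1)
    (Yp Yn : Finset (Fin c))
    (hYp : Yp = Finset.univ.filter (fun j => y j = 1))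
    (hYn : Yn = Finset.univ.filter (fun j => y j = -1))
    (hp : Yp.Nonempty) (hn : Yn.Nonempty) :
    (1 / ((Yp.card : ℝ) * (Yn.card : ℝ))) *
        ∑ p ∈ Yp, ∑ q ∈ Yn, (if H p ≤ H q then (1 : ℝ) else 0) ≤
      ((c : ℝ) / min (Yp.card : ℝ) (Yn.card : ℝ)) *
        ((1 / (c : ℝ)) * ∑ j, (if H j ≠ y j then (1 : ℝ) else 0)) ∧
    (1 / ((Yp.card : ℝ) * (Yn.card : ℝ))) *
        ∑ p ∈ Yp, ∑ q ∈ Yn, (if H p ≤ H q then (1 : ℝ) else 0) ≤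
      (c : ℝ) * ((1 / (c : ℝ)) * ∑ j, (if H j ≠ y j then (1 : ℝ) else 0)) := by
  have hcpos : (0:ℝ) < c := by exact_mod_cast hc
  have ha : (1:ℝ) ≤ (Yp.card : ℝ) := by exact_mod_cast hp.card_pos
  have hb : (1:ℝ) ≤ (Yn.card : ℝ) := by exact_mod_cast hn.card_pos
  set a : ℝ := (Yp.card : ℝ)
  set b : ℝ := (Yn.card : ℝ)
  set S := ∑ p ∈ Yp, ∑ q ∈ Yn, (if H p ≤ H q then (1:ℝ) else 0) with hSdef
  set Mp := ∑ p ∈ Yp, (if H p ≠ y p then (1:ℝ) else 0) with hMp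
  set Mn := ∑ q ∈ Yn, (if H q ≠ y q then (1:ℝ) else 0) with hMn
  set M := ∑ j, (if H j ≠ y j then (1:ℝ) else 0) with hMdef
  have hMp0 : 0 ≤ Mp := Finset.sum_nonneg (by intro i _; positivity)
  have hMn0 : 0 ≤ Mn := Finset.sum_nonneg (by intro i _; positivity)
  have hMsplit : Mp + Mn = M := by
    have hdisj : Disjoint Yp Yn := by
      rw [hYp, hYn, Finset.disjoint_filter]
      intro x _ h1 h2
      rw [h1] at h2; norm_num at h2
    have hunion : Yp ∪ Yn = Finset.univ := by
      rw [hYp, hYn]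
      ext x
      simp only [Finset.mem_union, Finset.mem_filter, Finset.mem_univ, true_and, iff_true]
      exact (hy x).symm.imp id id
    rw [hMp, hMn, hMdef, ← Finset.sum_union hdisj, hunion]
  have hkey : S ≤ b * Mp + a * Mn := by
    have step : S ≤ ∑ p ∈ Yp, ∑ q ∈ Yn,
        ((if H p ≠ y p then (1:ℝ) else 0) + (if H q ≠ y q then (1:ℝ) else 0)) := by
      apply Finset.sum_le_sum; intro p hp'
      apply Finset.sum_le_sum; intro q hq'
      have hyp : y p = 1 := by
        have := hp'; rw [hYp] at this; exact (Finset.mem_filter.mp this).2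
      have hyq : y q = -1 := by
        have := hq'; rw [hYn] at this; exact (Finset.mem_filter.mp this).2
      by_cases hle : H p ≤ H q
      · rw [if_pos hle]
        rcases hH p with h1 | h1
        · have : H p ≠ y p := by rw [h1, hyp]; norm_num
          rw [if_pos this]
          have : (0:ℝ) ≤ (if H q ≠ y q then (1:ℝ) else 0) := by positivity
          linarith
        · rcases hH q with h2 | h2
          · rw [h1, h2] at hle; linarith
          · have : H q ≠ y q := by rw [h2, hyq]; norm_num
            rw [if_pos this]
            have : (0:ℝ) ≤ (if H p ≠ y p then (1:ℝ) else 0) := by positivity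
            linarith
      · rw [if_neg hle]; positivity
    calc S ≤ _ := step
      _ = b * Mp + a * Mn := by
        simp only [Finset.sum_add_distrib, Finset.sum_const, nsmul_eq_mul]
        rw [← Finset.mul_sum]
  have hmin1 : (1:ℝ) ≤ min a b := le_min ha hb
  have hminpos : (0:ℝ) < min a b := by linarith
  have hapos : (0:ℝ) < a := by linarith
  have hbpos : (0:ℝ) < b := by linarith
  have hmain : (1 / (a * b)) * S ≤ M / min a b := by
    have h1 : (1 / (a * b)) * S ≤ (1 / (a * b)) * (b * Mp + a * Mn) := by
      apply mul_le_mul_of_nonneg_left hkey (by positivity)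
    have h2 : (1 / (a * b)) * (b * Mp + a * Mn) = Mp / a + Mn / b := by
      field_simp
    have h3 : Mp / a + Mn / b ≤ Mp / min a b + Mn / min a b := by
      gcongr
      · exact min_le_left a b
      · exact min_le_right a b
    have h4 : Mp / min a b + Mn / min a b = M / min a b := by
      rw [← add_div, hMsplit]
    linarith
  have hM0 : 0 ≤ M := by rw [← hMsplit]; linarith
  constructor
  · have heq : ((c:ℝ) / min a b) * ((1 / c) * M) = M / min a b := by
      field_simp
    rw [heq]; exact hmain
  · have heq : (c:ℝ) * ((1 / c) * M) = M := by
      field_simp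
    rw [heq]
    calc (1 / (a * b)) * S ≤ M / min a b := hmain
      _ ≤ M / 1 := by gcongr
      _ = M := div_one M
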